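/- The equivalence relation ≡_{E_{m,k}} is both right invariant and left invariant: for words w₁, w₂ of length ≥ 2k with E_{m,k}(w₁) = E_{m,k}(w₂), for all words r and l one has E_{m,k}(w₁r) = E_{m,k}(w₂r) and E_{m,k}(lw₁) = E_{m,k}(lw₂). -/

import Mathlib

open scoped Classical

namespace Hairpin

variable {V : Type}

/-- Reversed complement of a word under the involution `bar`. -/
def rc (bar : V → V) (w : List V) : List V := (w.map bar).reverse

/-- `w` admits a right hairpin decomposition `w = δγαβᾱ^R` with `|α| = k`, `|γ| ≤ m`. -/
def hasRightDecomp (bar : V → V) (m k : ℕ) (w : List V) : Prop :=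
  ∃ δ γ α β : List V, w = δ ++ γ ++ α ++ β ++ rc bar α ∧ α.length = k ∧ γ.length ≤ m

def hasLeftDecomp (bar : V → V) (m k : ℕ) (w : List V) : Prop :=
  ∃ α β γ δ : List V, w = α ++ β ++ rc bar α ++ γ ++ δ ∧ α.length = k ∧ γ.length ≤ m

/-- m-bounded right k-hairpin incompletion. -/
noncomputable def rHI (bar : V → V) (m k : ℕ) (w : List V) : Set (List V) :=
  if hasRightDecomp bar m k w then
    { v | ∃ δ γ α β : List V, w = δ ++ γ ++ α ++ β ++ rc bar α ∧ α.length = k ∧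
          γ.length ≤ m ∧ v = w ++ rc bar γ }
  else {w}

/-- m-bounded left k-hairpin incompletion. -/
noncomputable def lHI (bar : V → V) (m k : ℕ) (w : List V) : Set (List V) :=
  if hasLeftDecomp bar m k w then
    { v | ∃ α β γ δ : List V, w = α ++ β ++ rc bar α ++ γ ++ δ ∧ α.length = k ∧
          γ.length ≤ m ∧ v = rc bar γ ++ w }
  else {w}

/-- m-bounded k-hairpin incompletion. -/
noncomputable def HI (bar : V → V) (m k : ℕ) (w : List V) : Set (List V) :=
  rHI bar m k w ∪ lHI bar m k w

noncomputable def rHIn (bar : V → V) (m k : ℕ) (w : List V) : ℕ → Set (List V)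
  | 0 => {w}
  | n + 1 => ⋃ v ∈ rHIn bar m k w n, rHI bar m k v

noncomputable def rHIstar (bar : V → V) (m k : ℕ) (w : List V) : Set (List V) :=
  ⋃ n, rHIn bar m k w n

noncomputable def HIn (bar : V → V) (m k : ℕ) (w : List V) : ℕ → Set (List V)
  | 0 => {w}
  | n + 1 => ⋃ v ∈ HIn bar m k w n, HI bar m k v

noncomputable def HIstar (bar : V → V) (m k : ℕ) (w : List V) : Set (List V) :=
  ⋃ n, HIn bar m k w n

noncomputable def rHIstarL (bar : V → V) (m k : ℕ) (L : Set (List V)) : Set (List V) :=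
  ⋃ w ∈ L, rHIstar bar m k w

noncomputable def HIL (bar : V → V) (m k : ℕ) (L : Set (List V)) : Set (List V) :=
  ⋃ w ∈ L, HI bar m k w

noncomputable def HIstarL (bar : V → V) (m k : ℕ) (L : Set (List V)) : Set (List V) :=
  ⋃ w ∈ L, HIstar bar m k w

/-- The set `C_{m,k}(w)`. -/
def Cmk (bar : V → V) (m k : ℕ) (w : List V) : Set (List V × List V) :=
  { p | ∃ x y w₁ w₂ z : List V,
      x.length ≤ m ∧ y.length = k ∧ w = w₁ ++ (x ++ y) ++ w₂ ∧
      z.length ≤ k ∧ z <:+ w₂ ∧ z <+: rc bar y ∧ p = (x ++ y, z) }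

/-- The suffix component of `D_{m,k}(w)`: all suffixes of `w` of length `i+k-1`, `0 ≤ i ≤ m`. -/
def DmkSuf (m k : ℕ) (w : List V) : Set (List V) :=
  { s | ∃ i ≤ m, s.length = i + k - 1 ∧ s <:+ w }

noncomputable def Dmk (bar : V → V) (m k : ℕ) (w : List V) :
    Set (List V × List V) × Set (List V) :=
  (Cmk bar m k w, DmkSuf m k w)

/-- The set `C'_{m,k}(w)`. -/
def Cmk' (bar : V → V) (m k : ℕ) (w : List V) : Set (List V × List V) :=
  { p | ∃ x y w₁ w₂ z : List V,
      x.length ≤ m ∧ y.length = k ∧ w = w₁ ++ (y ++ x) ++ w₂ ∧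
      z.length ≤ k ∧ z <+: w₁ ∧ z <:+ rc bar y ∧ p = (z, y ++ x) }

/-- The prefix component of `D'_{m,k}(w)`. -/
def DmkPref (m k : ℕ) (w : List V) : Set (List V) :=
  { s | ∃ i ≤ m, s.length = i + k - 1 ∧ s <+: w }

noncomputable def Dmk' (bar : V → V) (m k : ℕ) (w : List V) :
    Set (List V × List V) × Set (List V) :=
  (Cmk' bar m k w, DmkPref m k w)

noncomputable def Emk (bar : V → V) (m k : ℕ) (w : List V) :=
  (Dmk bar m k w, Dmk' bar m k w)


/-- View a set of words as a `Language`. -/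
def lang {V : Type} (L : Set (List V)) : Language V := L


section Invariance
variable {V : Type}

lemma pre_of_pre_append {z w p : List V} (h : z <+: w ++ p) (hl : z.length ≤ w.length) :
    z <+: w := by
  have h1 : z = (w ++ p).take z.length := List.prefix_iff_eq_take.mp h
  rw [List.take_append_of_le_length hl] at h1
  exact h1 ▸ List.take_prefix _ _

lemma pre_append_of_pre {z w : List V} (p : List V) (h : z <+: w) : z <+: w ++ p :=
  h.trans (List.prefix_append w p)

lemma suf_append_of_suf {z w : List V} (p : List V) (h : z <:+ w) : z <:+ p ++ w :=
  h.trans (List.suffix_append p w)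

lemma suf_of_suf_append {z w p : List V} (h : z <:+ p ++ w) (hl : z.length ≤ w.length) :
    z <:+ w := by
  obtain ⟨t, ht⟩ := h
  rcases List.append_eq_append_iff.mp ht with ⟨a', ha, hb⟩ | ⟨c', hc, hd⟩
  · have : a' = [] := by
      have := congrArg List.length hb
      simp at this
      have : a'.length = 0 := by omega
      exact List.eq_nil_of_length_eq_zero this
    subst this
    simp at hb
    exact hb ▸ List.suffix_refl _
  · exact ⟨c', hd.symm⟩

lemma pre_append_split {z l a : List V} (h : z <+: l ++ a) (hl : l.length ≤ z.length) :
    ∃ z', z = l ++ z' ∧ z' <+: a := by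
  obtain ⟨t, ht⟩ := h
  rcases List.append_eq_append_iff.mp ht with ⟨a', ha, hb⟩ | ⟨c, hc, hd⟩
  · have : a' = [] := by
      have := congrArg List.length ha
      simp at this
      have : a'.length = 0 := by omega
      exact List.eq_nil_of_length_eq_zero this
    subst this
    simp at ha
    exact ⟨[], by simp [ha], ⟨a, by simp⟩⟩
  · exact ⟨c, hc, ⟨t, hd.symm⟩⟩

lemma suf_append_split {z a r : List V} (h : z <:+ a ++ r) :
    z <:+ r ∨ ∃ z', z = z' ++ r ∧ z' <:+ a := by
  obtain ⟨q, hq⟩ := h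
  rcases List.append_eq_append_iff.mp hq with ⟨a', ha, hb⟩ | ⟨c, hc, hd⟩
  · exact Or.inr ⟨a', hb, ⟨q, ha.symm⟩⟩
  · exact Or.inl ⟨c, hd.symm⟩

lemma pre_app_left {z a : List V} (l : List V) (h : z <+: a) : l ++ z <+: l ++ a := by
  obtain ⟨q, hq⟩ := h
  exact ⟨q, by rw [List.append_assoc, hq]⟩

lemma suf_app_right {z u : List V} (r : List V) (h : z <:+ u) : z ++ r <:+ u ++ r := by
  obtain ⟨q, hq⟩ := h
  exact ⟨q, by rw [← List.append_assoc, hq]⟩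

/-- Splitting an occurrence `w ++ r = a ++ v ++ b`. -/
lemma occ_split_right {w r a v b : List V} (h : w ++ r = a ++ v ++ b) :
    (∃ u, w = a ++ v ++ u ∧ b = u ++ r) ∨
    (∃ p, a = w ++ p ∧ r = p ++ v ++ b) ∨
    (∃ s t, w = a ++ s ∧ v = s ++ t ∧ r = t ++ b ∧ s ≠ [] ∧ t ≠ []) := by
  rw [List.append_assoc] at h
  rcases List.append_eq_append_iff.mp h with ⟨p, hp, hr⟩ | ⟨c, hc, hd⟩
  · exact Or.inr (Or.inl ⟨p, hp, by rw [hr, List.append_assoc]⟩)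
  · rcases List.append_eq_append_iff.mp hd with ⟨u, hu, hb⟩ | ⟨t, ht, hr⟩
    · exact Or.inl ⟨u, by rw [hc, hu, List.append_assoc], hb⟩
    · rcases eq_or_ne c [] with hce | hce
      · subst hce
        simp at hc ht
        exact Or.inr (Or.inl ⟨[], by simp [hc], by simp [ht, hr]⟩)
      · rcases eq_or_ne t [] with hte | hte
        · subst hte
          simp at ht hr
          exact Or.inl ⟨[], by simp [hc, ht], by simp [hr]⟩
        · exact Or.inr (Or.inr ⟨c, t, hc, ht, hr, hce, hte⟩)

/-- Splitting an occurrence `l ++ w = a ++ v ++ b`. -/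
lemma occ_split_left {l w a v b : List V} (h : l ++ w = a ++ v ++ b) :
    (∃ u, w = u ++ v ++ b ∧ a = l ++ u) ∨
    (∃ p, l = a ++ v ++ p ∧ b = p ++ w) ∨
    (∃ t s, l = a ++ t ∧ v = t ++ s ∧ w = s ++ b ∧ t ≠ [] ∧ s ≠ []) := by
  rcases List.append_eq_append_iff.mp h with ⟨a', ha, hw⟩ | ⟨c, hc, hb⟩
  · rcases List.append_eq_append_iff.mp ha with ⟨x, hx, hv⟩ | ⟨y, hy, hv⟩
    · rcases eq_or_ne x [] with hxe | hxe
      · subst hxe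
        simp at hx hv
        exact Or.inl ⟨[], by simp [hw, hv], by simp [hx]⟩
      · rcases eq_or_ne a' [] with hae | hae
        · subst hae
          simp at hv hw
          exact Or.inr (Or.inl ⟨[], by simp [hx, hv], by simp [hw]⟩)
        · exact Or.inr (Or.inr ⟨x, a', hx, hv, hw, hxe, hae⟩)
    · exact Or.inl ⟨y, by rw [hw, hv, List.append_assoc], hy⟩
  · exact Or.inr (Or.inl ⟨c, by rw [hc, List.append_assoc], hb⟩)

lemma Cmk_intro {bar : V → V} {m k : ℕ} {w x y a u z : List V}
    (hx : x.length ≤ m) (hy : y.length = k) (hw : w = a ++ (x ++ y) ++ u)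
    (hzk : z.length ≤ k) (hzs : z <:+ u) (hzp : z <+: rc bar y) :
    (x ++ y, z) ∈ Cmk bar m k w :=
  ⟨x, y, a, u, z, hx, hy, hw, hzk, hzs, hzp, rfl⟩

lemma Cmk_elim {bar : V → V} {m k : ℕ} {w x y z : List V} (hy : y.length = k)
    (h : (x ++ y, z) ∈ Cmk bar m k w) :
    ∃ a u, w = a ++ (x ++ y) ++ u ∧ z <:+ u := by
  obtain ⟨x', y', a, u, z', hx', hy', hw, hzk, hzs, hzp, hp⟩ := h
  have h1 : x ++ y = x' ++ y' := congrArg Prod.fst hp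
  have h2 : z = z' := congrArg Prod.snd hp
  obtain ⟨rfl, rfl⟩ := List.append_inj' h1 (by rw [hy, hy'])
  exact ⟨a, u, hw, h2 ▸ hzs⟩

lemma Cmk'_intro {bar : V → V} {m k : ℕ} {w x y a u z : List V}
    (hx : x.length ≤ m) (hy : y.length = k) (hw : w = a ++ (y ++ x) ++ u)
    (hzk : z.length ≤ k) (hzp : z <+: a) (hzs : z <:+ rc bar y) :
    (z, y ++ x) ∈ Cmk' bar m k w :=
  ⟨x, y, a, u, z, hx, hy, hw, hzk, hzp, hzs, rfl⟩

lemma Cmk'_elim {bar : V → V} {m k : ℕ} {w x y z : List V} (hy : y.length = k)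
    (h : (z, y ++ x) ∈ Cmk' bar m k w) :
    ∃ a u, w = a ++ (y ++ x) ++ u ∧ z <+: a := by
  obtain ⟨x', y', a, u, z', hx', hy', hw, hzk, hzp, hzs, hp⟩ := h
  have h1 : y ++ x = y' ++ x' := congrArg Prod.snd hp
  have h2 : z = z' := congrArg Prod.fst hp
  obtain ⟨rfl, rfl⟩ := List.append_inj h1 (by rw [hy, hy'])
  exact ⟨a, u, hw, h2 ▸ hzp⟩

end Invariance
section Right
variable {V : Type} {bar : V → V} {m k : ℕ} {w₁ w₂ : List V}

lemma Cmk_right_subset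
    (hC : Cmk bar m k w₁ ⊆ Cmk bar m k w₂)
    (hsuf : ∀ z : List V, z.length ≤ m + k - 1 → z <:+ w₁ → z <:+ w₂)
    (r : List V) :
    Cmk bar m k (w₁ ++ r) ⊆ Cmk bar m k (w₂ ++ r) := by
  rintro p ⟨x, y, a, b, z, hx, hy, hw, hzk, hzs, hzp, rfl⟩
  rcases occ_split_right hw with ⟨u, hw1, rfl⟩ | ⟨p', rfl, hr⟩ | ⟨s, t, hw1, hv, hr, hse, hte⟩
  · -- occurrence inside w₁
    rcases suf_append_split hzs with hzr | ⟨z', rfl, hz'⟩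
    · have h0 : (x ++ y, ([] : List V)) ∈ Cmk bar m k w₁ :=
        Cmk_intro hx hy hw1 (by simp) (List.nil_suffix) (List.nil_prefix)
      obtain ⟨a₂, u₂, hw2, -⟩ := Cmk_elim hy (hC h0)
      exact Cmk_intro hx hy
        (show w₂ ++ r = a₂ ++ (x ++ y) ++ (u₂ ++ r) by simp [hw2])
        hzk (suf_append_of_suf u₂ hzr) hzp
    · have hz'k : z'.length ≤ k := by
        have := List.length_append (as := z') (bs := r); omega
      have h0 : (x ++ y, z') ∈ Cmk bar m k w₁ :=
        Cmk_intro hx hy hw1 hz'k hz' ((List.prefix_append z' r).trans hzp)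
      obtain ⟨a₂, u₂, hw2, hz2⟩ := Cmk_elim hy (hC h0)
      exact Cmk_intro hx hy
        (show w₂ ++ r = a₂ ++ (x ++ y) ++ (u₂ ++ r) by simp [hw2])
        hzk (suf_app_right r hz2) hzp
  · -- occurrence inside r
    exact Cmk_intro hx hy
      (show w₂ ++ r = (w₂ ++ p') ++ (x ++ y) ++ b by rw [hr]; simp) hzk hzs hzp
  · -- straddling occurrence
    have hslen : s.length ≤ m + k - 1 := by
      have h1 := congrArg List.length hv
      simp [List.length_append] at h1
      have h2 : 1 ≤ t.length := List.length_pos_iff.mpr hte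
      omega
    obtain ⟨a₂, ha₂⟩ := hsuf s hslen ⟨a, hw1.symm⟩
    exact Cmk_intro hx hy
      (show w₂ ++ r = a₂ ++ (x ++ y) ++ b by rw [← ha₂, hr, hv]; simp) hzk hzs hzp

lemma DmkSuf_right_subset
    (hsuf : ∀ z : List V, z.length ≤ m + k - 1 → z <:+ w₁ → z <:+ w₂)
    (r : List V) :
    DmkSuf m k (w₁ ++ r) ⊆ DmkSuf m k (w₂ ++ r) := by
  rintro s ⟨i, him, hlen, hs⟩
  rcases suf_append_split hs with h | ⟨s', rfl, hs'⟩
  · exact ⟨i, him, hlen, suf_append_of_suf w₂ h⟩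
  · have : s'.length ≤ m + k - 1 := by
      have := List.length_append (as := s') (bs := r); omega
    exact ⟨i, him, hlen, suf_app_right r (hsuf s' this hs')⟩

lemma Cmk'_right_subset
    (hC' : Cmk' bar m k w₁ ⊆ Cmk' bar m k w₂)
    (hsuf : ∀ z : List V, z.length ≤ m + k - 1 → z <:+ w₁ → z <:+ w₂)
    (hpref : ∀ z : List V, z.length ≤ m + k - 1 → z <+: w₁ → z <+: w₂)
    (hm : 1 ≤ m) (hk : 1 ≤ k) (hw1 : 2 * k ≤ w₁.length) (hw2 : 2 * k ≤ w₂.length)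
    (r : List V) :
    Cmk' bar m k (w₁ ++ r) ⊆ Cmk' bar m k (w₂ ++ r) := by
  rintro p ⟨x, y, a, b, z, hx, hy, hw, hzk, hzpre, hzsuf, rfl⟩
  rcases occ_split_right hw with ⟨u, hw1e, rfl⟩ | ⟨p', rfl, hr⟩ | ⟨s, t, hw1e, hv, hr, hse, hte⟩
  · -- occurrence inside w₁
    have h0 : (z, y ++ x) ∈ Cmk' bar m k w₁ := Cmk'_intro hx hy hw1e hzk hzpre hzsuf
    obtain ⟨a₂, u₂, hw2e, hz2⟩ := Cmk'_elim hy (hC' h0)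
    exact Cmk'_intro hx hy
      (show w₂ ++ r = a₂ ++ (y ++ x) ++ (u₂ ++ r) by simp [hw2e]) hzk hz2 hzsuf
  · -- occurrence inside r
    have hzw1 : z <+: w₁ := pre_of_pre_append hzpre (by omega)
    have hzw2 : z <+: w₂ := hpref z (by omega) hzw1
    exact Cmk'_intro hx hy
      (show w₂ ++ r = (w₂ ++ p') ++ (y ++ x) ++ b by rw [hr]; simp)
      hzk (pre_append_of_pre p' hzw2) hzsuf
  · -- straddling occurrence
    have hlv := congrArg List.length hv
    simp [List.length_append] at hlv
    have hts : 1 ≤ t.length := List.length_pos_iff.mpr hte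
    have hslen : s.length ≤ m + k - 1 := by omega
    obtain ⟨b₂, hb₂⟩ := hsuf s hslen ⟨a, hw1e.symm⟩
    have hlb₂ : b₂.length = w₂.length - s.length ∧ s.length ≤ w₂.length := by
      have := congrArg List.length hb₂; simp at this; omega
    have hzw1 : z <+: w₁ := hzpre.trans ⟨s, hw1e.symm⟩
    by_cases hks : k ≤ s.length
    · -- y is a prefix of s : s = y ++ x̂, x = x̂ ++ t
      have hyv : y <+: s ++ t := by rw [← hv]; exact List.prefix_append y x
      have hys : y <+: s := pre_of_pre_append hyv (by omega)
      obtain ⟨xh, hxh⟩ := hys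
      have hxeq : x = xh ++ t := by
        apply List.append_cancel_left (as := y)
        rw [← List.append_assoc, hxh, hv]
      have hxhm : xh.length ≤ m := by
        have h1 := congrArg List.length hxh
        have h2 := congrArg List.length hxeq
        simp [List.length_append] at h1 h2
        omega
      have h0 : (z, y ++ xh) ∈ Cmk' bar m k w₁ :=
        Cmk'_intro hxhm hy
          (show w₁ = a ++ (y ++ xh) ++ [] by rw [hw1e, hxh]; simp) hzk hzpre hzsuf
      obtain ⟨a₂, u₂, hw2e, hz2⟩ := Cmk'_elim hy (hC' h0)
      have hza₂ : z.length ≤ a₂.length := hz2.length_le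
      have hl2 := congrArg List.length hw2e
      have hlxh := congrArg List.length hxh
      simp [List.length_append] at hl2 hlxh
      have hzb₂ : z <+: b₂ := by
        refine pre_of_pre_append (w := b₂) (p := s) ?_ (by omega)
        rw [hb₂]
        exact hz2.trans ⟨(y ++ xh) ++ u₂, by rw [hw2e]; simp⟩
      exact Cmk'_intro hx hy
        (show w₂ ++ r = b₂ ++ (y ++ x) ++ b by rw [← hb₂, hr, hv]; simp)
        hzk hzb₂ hzsuf
    · -- s shorter than k
      have hzw2 : z <+: w₂ := hpref z (by omega) hzw1
      have hzb₂ : z <+: b₂ := pre_of_pre_append (w := b₂) (p := s) (hb₂ ▸ hzw2) (by omega)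
      exact Cmk'_intro hx hy
        (show w₂ ++ r = b₂ ++ (y ++ x) ++ b by rw [← hb₂, hr, hv]; simp)
        hzk hzb₂ hzsuf

lemma DmkPref_right_subset
    (hpref : ∀ z : List V, z.length ≤ m + k - 1 → z <+: w₁ → z <+: w₂)
    (hk : 1 ≤ k) (hmw1 : m + k ≤ w₁.length) (r : List V) :
    DmkPref m k (w₁ ++ r) ⊆ DmkPref m k (w₂ ++ r) := by
  rintro s ⟨i, him, hlen, hs⟩
  have h1 : s <+: w₁ := pre_of_pre_append hs (by omega)
  exact ⟨i, him, hlen, pre_append_of_pre r (hpref s (by omega) h1)⟩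

end Right
section Left
variable {V : Type} {bar : V → V} {m k : ℕ} {w₁ w₂ : List V}

lemma Cmk_left_subset
    (hC : Cmk bar m k w₁ ⊆ Cmk bar m k w₂)
    (hsuf : ∀ z : List V, z.length ≤ m + k - 1 → z <:+ w₁ → z <:+ w₂)
    (hpref : ∀ z : List V, z.length ≤ m + k - 1 → z <+: w₁ → z <+: w₂)
    (hm : 1 ≤ m) (hk : 1 ≤ k) (hw1 : 2 * k ≤ w₁.length) (hw2 : 2 * k ≤ w₂.length)
    (l : List V) :
    Cmk bar m k (l ++ w₁) ⊆ Cmk bar m k (l ++ w₂) := by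
  rintro p ⟨x, y, a, b, z, hx, hy, hw, hzk, hzs, hzp, rfl⟩
  rcases occ_split_left hw with ⟨u, hw1e, rfl⟩ | ⟨p', hl, rfl⟩ | ⟨t, s, hl, hv, hw1e, hte, hse⟩
  · -- occurrence inside w₁
    have h0 : (x ++ y, z) ∈ Cmk bar m k w₁ := Cmk_intro hx hy hw1e hzk hzs hzp
    obtain ⟨a₂, u₂, hw2e, hz2⟩ := Cmk_elim hy (hC h0)
    exact Cmk_intro hx hy
      (show l ++ w₂ = (l ++ a₂) ++ (x ++ y) ++ u₂ by rw [hw2e]; simp) hzk hz2 hzp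
  · -- occurrence inside l
    have hzw1 : z <:+ w₁ := suf_of_suf_append hzs (by omega)
    have hzw2 : z <:+ w₂ := hsuf z (by omega) hzw1
    exact Cmk_intro hx hy
      (show l ++ w₂ = a ++ (x ++ y) ++ (p' ++ w₂) by rw [hl]; simp)
      hzk (suf_append_of_suf p' hzw2) hzp
  · -- straddling occurrence
    have hlv := congrArg List.length hv
    simp [List.length_append] at hlv
    have hts : 1 ≤ t.length := List.length_pos_iff.mpr hte
    have hslen : s.length ≤ m + k - 1 := by omega
    obtain ⟨b₂, hb₂⟩ := hpref s hslen ⟨b, hw1e.symm⟩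
    have hlb₂ : b₂.length = w₂.length - s.length ∧ s.length ≤ w₂.length := by
      have := congrArg List.length hb₂; simp at this; omega
    have hzw1 : z <:+ w₁ := hzs.trans ⟨s, hw1e.symm⟩
    by_cases hks : k ≤ s.length
    · -- y is a suffix of s : s = x̂ ++ y, x = t ++ x̂
      have hyv : y <:+ t ++ s := by rw [← hv]; exact List.suffix_append x y
      have hys : y <:+ s := suf_of_suf_append hyv (by omega)
      obtain ⟨xh, hxh⟩ := hys
      have hxeq : x = t ++ xh := by
        have hq : x ++ y = (t ++ xh) ++ y := by rw [List.append_assoc, hxh, hv]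
        exact List.append_cancel_right hq
      have hxhm : xh.length ≤ m := by
        have h1 := congrArg List.length hxh
        have h2 := congrArg List.length hxeq
        simp [List.length_append] at h1 h2
        omega
      have h0 : (xh ++ y, z) ∈ Cmk bar m k w₁ :=
        Cmk_intro hxhm hy
          (show w₁ = [] ++ (xh ++ y) ++ b by rw [hw1e, hxh]; simp) hzk hzs hzp
      obtain ⟨a₂, u₂, hw2e, hz2⟩ := Cmk_elim hy (hC h0)
      have hzu₂ : z.length ≤ u₂.length := hz2.length_le
      have hl2 := congrArg List.length hw2e
      have hlxh := congrArg List.length hxh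
      simp [List.length_append] at hl2 hlxh
      have hzb₂ : z <:+ b₂ := by
        refine suf_of_suf_append (w := b₂) (p := s) ?_ (by omega)
        rw [hb₂]
        exact hz2.trans ⟨a₂ ++ (xh ++ y), by simp [hw2e]⟩
      exact Cmk_intro hx hy
        (show l ++ w₂ = a ++ (x ++ y) ++ b₂ by rw [← hb₂, hl, hv]; simp)
        hzk hzb₂ hzp
    · -- s shorter than k
      have hzw2 : z <:+ w₂ := hsuf z (by omega) hzw1
      have hzb₂ : z <:+ b₂ := suf_of_suf_append (w := b₂) (p := s) (hb₂ ▸ hzw2) (by omega)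
      exact Cmk_intro hx hy
        (show l ++ w₂ = a ++ (x ++ y) ++ b₂ by rw [← hb₂, hl, hv]; simp)
        hzk hzb₂ hzp

lemma DmkSuf_left_subset
    (hsuf : ∀ z : List V, z.length ≤ m + k - 1 → z <:+ w₁ → z <:+ w₂)
    (hk : 1 ≤ k) (hmw1 : m + k ≤ w₁.length) (l : List V) :
    DmkSuf m k (l ++ w₁) ⊆ DmkSuf m k (l ++ w₂) := by
  rintro s ⟨i, him, hlen, hs⟩
  have h1 : s <:+ w₁ := suf_of_suf_append hs (by omega)
  exact ⟨i, him, hlen, suf_append_of_suf l (hsuf s (by omega) h1)⟩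

lemma Cmk'_left_subset
    (hC' : Cmk' bar m k w₁ ⊆ Cmk' bar m k w₂)
    (hpref : ∀ z : List V, z.length ≤ m + k - 1 → z <+: w₁ → z <+: w₂)
    (hk : 1 ≤ k) (l : List V) :
    Cmk' bar m k (l ++ w₁) ⊆ Cmk' bar m k (l ++ w₂) := by
  rintro p ⟨x, y, a, b, z, hx, hy, hw, hzk, hzpre, hzsuf, rfl⟩
  rcases occ_split_left hw with ⟨u, hw1e, rfl⟩ | ⟨p', hl, rfl⟩ | ⟨t, s, hl, hv, hw1e, hte, hse⟩
  · -- occurrence inside w₁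
    by_cases hzl : z.length ≤ l.length
    · have hzll : z <+: l := pre_of_pre_append hzpre hzl
      have h0 : (([] : List V), y ++ x) ∈ Cmk' bar m k w₁ :=
        Cmk'_intro hx hy hw1e (by simp) (List.nil_prefix) (List.nil_suffix)
      obtain ⟨a₂, u₂, hw2e, -⟩ := Cmk'_elim hy (hC' h0)
      exact Cmk'_intro hx hy
        (show l ++ w₂ = (l ++ a₂) ++ (y ++ x) ++ u₂ by rw [hw2e]; simp)
        hzk (hzll.trans (List.prefix_append l a₂)) hzsuf
    · obtain ⟨z', rfl, hz'⟩ := pre_append_split hzpre (by omega)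
      have hz'k : z'.length ≤ k := by
        have := List.length_append (as := l) (bs := z'); omega
      have h0 : (z', y ++ x) ∈ Cmk' bar m k w₁ :=
        Cmk'_intro hx hy hw1e hz'k hz' ((List.suffix_append l z').trans hzsuf)
      obtain ⟨a₂, u₂, hw2e, hz2⟩ := Cmk'_elim hy (hC' h0)
      exact Cmk'_intro hx hy
        (show l ++ w₂ = (l ++ a₂) ++ (y ++ x) ++ u₂ by rw [hw2e]; simp)
        hzk (pre_app_left l hz2) hzsuf
  · -- occurrence inside l
    exact Cmk'_intro hx hy
      (show l ++ w₂ = a ++ (y ++ x) ++ (p' ++ w₂) by rw [hl]; simp) hzk hzpre hzsuf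
  · -- straddling occurrence
    have hlv := congrArg List.length hv
    simp [List.length_append] at hlv
    have hts : 1 ≤ t.length := List.length_pos_iff.mpr hte
    have hslen : s.length ≤ m + k - 1 := by omega
    obtain ⟨b₂, hb₂⟩ := hpref s hslen ⟨b, hw1e.symm⟩
    exact Cmk'_intro hx hy
      (show l ++ w₂ = a ++ (y ++ x) ++ b₂ by rw [← hb₂, hl, hv]; simp) hzk hzpre hzsuf

lemma DmkPref_left_subset
    (hpref : ∀ z : List V, z.length ≤ m + k - 1 → z <+: w₁ → z <+: w₂)
    (l : List V) :
    DmkPref m k (l ++ w₁) ⊆ DmkPref m k (l ++ w₂) := by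
  rintro s ⟨i, him, hlen, hs⟩
  by_cases hsl : s.length ≤ l.length
  · exact ⟨i, him, hlen, pre_append_of_pre w₂ (pre_of_pre_append hs hsl)⟩
  · obtain ⟨s', rfl, hs'⟩ := pre_append_split hs (by omega)
    have : s'.length ≤ m + k - 1 := by
      have := List.length_append (as := l) (bs := s'); omega
    exact ⟨i, him, hlen, pre_app_left l (hpref s' this hs')⟩

end Left
section Shared
variable {V : Type} {bar : V → V} {m k : ℕ} {w₁ w₂ : List V}

lemma shared_prefixes (hP : DmkPref m k w₁ = DmkPref m k w₂)
    (hk : 1 ≤ k) (hw1 : k ≤ w₁.length) :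
    ∀ z : List V, z.length ≤ m + k - 1 → z <+: w₁ → z <+: w₂ := by
  intro z hzl hz
  by_cases hzk : k - 1 ≤ z.length
  · have h1 : z ∈ DmkPref m k w₁ := ⟨z.length + 1 - k, by omega, by omega, hz⟩
    rw [hP] at h1
    obtain ⟨-, -, -, h⟩ := h1
    exact h
  · have h1 : w₁.take (k - 1) ∈ DmkPref m k w₁ :=
      ⟨0, Nat.zero_le _, by simp; omega, List.take_prefix _ _⟩
    rw [hP] at h1
    obtain ⟨i, -, -, hpw₂⟩ := h1
    exact (List.prefix_of_prefix_length_le hz (List.take_prefix _ _)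
      (by simp; omega)).trans hpw₂

lemma shared_suffixes (hS : DmkSuf m k w₁ = DmkSuf m k w₂)
    (hk : 1 ≤ k) (hw1 : k ≤ w₁.length) :
    ∀ z : List V, z.length ≤ m + k - 1 → z <:+ w₁ → z <:+ w₂ := by
  intro z hzl hz
  by_cases hzk : k - 1 ≤ z.length
  · have h1 : z ∈ DmkSuf m k w₁ := ⟨z.length + 1 - k, by omega, by omega, hz⟩
    rw [hS] at h1
    obtain ⟨-, -, -, h⟩ := h1
    exact h
  · have h1 : w₁.drop (w₁.length - (k - 1)) ∈ DmkSuf m k w₁ :=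
      ⟨0, Nat.zero_le _, by simp; omega, List.drop_suffix _ _⟩
    rw [hS] at h1
    obtain ⟨i, -, -, hsw₂⟩ := h1
    exact (List.suffix_of_suffix_length_le hz (List.drop_suffix _ _)
      (by simp; omega)).trans hsw₂

lemma len_le_of_Cmk_subset (hC : Cmk bar m k w₁ ⊆ Cmk bar m k w₂)
    (hk : 1 ≤ k) (hw1 : k ≤ w₁.length) :
    min w₁.length (m + k) ≤ w₂.length := by
  set j := min w₁.length (m + k) with hj
  set v := w₁.take j with hvdef
  have hvlen : v.length = j := by simp [hvdef]; omega
  have hjk : k ≤ j := by omega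
  set x := v.take (j - k) with hxdef
  set y := v.drop (j - k) with hydef
  have hxy : x ++ y = v := List.take_append_drop _ _
  have hxlen : x.length ≤ m := by simp [hxdef, hvlen]; omega
  have hylen : y.length = k := by simp [hydef, hvlen]; omega
  have h0 : (x ++ y, ([] : List V)) ∈ Cmk bar m k w₁ :=
    Cmk_intro hxlen hylen
      (show w₁ = [] ++ (x ++ y) ++ w₁.drop j by rw [hxy]; simp [hvdef])
      (by simp) (List.nil_suffix) (List.nil_prefix)
  obtain ⟨a₂, u₂, hw2e, -⟩ := Cmk_elim hylen (hC h0)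
  rw [hxy] at hw2e
  have h2 := congrArg List.length hw2e
  simp [List.length_append, hvlen] at h2
  omega

lemma eq_of_short (hC : Cmk bar m k w₁ = Cmk bar m k w₂)
    (hP : DmkPref m k w₁ = DmkPref m k w₂)
    (hk : 1 ≤ k) (h₁ : 2 * k ≤ w₁.length) (h₂ : 2 * k ≤ w₂.length)
    (hshort : w₁.length < m + k ∨ w₂.length < m + k) : w₁ = w₂ := by
  have hA := len_le_of_Cmk_subset (w₁ := w₁) (w₂ := w₂) hC.le hk (by omega)
  have hB := len_le_of_Cmk_subset (w₁ := w₂) (w₂ := w₁) hC.ge hk (by omega)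
  have hlen : w₁.length = w₂.length ∧ w₁.length < m + k := by omega
  have h1 : w₁ ∈ DmkPref m k w₁ :=
    ⟨w₁.length + 1 - k, by omega, by omega, List.prefix_refl _⟩
  rw [hP] at h1
  obtain ⟨-, -, -, hpw⟩ := h1
  exact List.IsPrefix.eq_of_length hpw hlen.1

end Shared
variable {V : Type} [Fintype V]

theorem Emk_right_left_invariant (bar : V → V) (hbar : ∀ a, bar (bar a) = a) (m k : ℕ) (hm : 1 ≤ m) (hk : 1 ≤ k)
    (w₁ w₂ : List V) (h₁ : 2 * k ≤ w₁.length) (h₂ : 2 * k ≤ w₂.length)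
    (h : Emk bar m k w₁ = Emk bar m k w₂) :
    ∀ r l : List V, Emk bar m k (w₁ ++ r) = Emk bar m k (w₂ ++ r) ∧
      Emk bar m k (l ++ w₁) = Emk bar m k (l ++ w₂) := by
  intro r l
  have hC12 : Cmk bar m k w₁ = Cmk bar m k w₂ := congrArg (fun e => e.1.1) h
  have hS12 : DmkSuf m k w₁ = DmkSuf m k w₂ := congrArg (fun e => e.1.2) h
  have hC'12 : Cmk' bar m k w₁ = Cmk' bar m k w₂ := congrArg (fun e => e.2.1) h
  have hP12 : DmkPref m k w₁ = DmkPref m k w₂ := congrArg (fun e => e.2.2) h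
  by_cases hshort : w₁.length < m + k ∨ w₂.length < m + k
  · have heq := eq_of_short hC12 hP12 hk h₁ h₂ hshort
    subst heq
    exact ⟨rfl, rfl⟩
  · push_neg at hshort
    obtain ⟨hm1, hm2⟩ := hshort
    have hpre12 := shared_prefixes hP12 hk (by omega)
    have hpre21 := shared_prefixes hP12.symm hk (by omega)
    have hsuf12 := shared_suffixes hS12 hk (by omega)
    have hsuf21 := shared_suffixes hS12.symm hk (by omega)
    constructor
    · have e1 : Cmk bar m k (w₁ ++ r) = Cmk bar m k (w₂ ++ r) :=
        Set.Subset.antisymm (Cmk_right_subset hC12.le hsuf12 r)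
          (Cmk_right_subset hC12.ge hsuf21 r)
      have e2 : DmkSuf m k (w₁ ++ r) = DmkSuf m k (w₂ ++ r) :=
        Set.Subset.antisymm (DmkSuf_right_subset hsuf12 r) (DmkSuf_right_subset hsuf21 r)
      have e3 : Cmk' bar m k (w₁ ++ r) = Cmk' bar m k (w₂ ++ r) :=
        Set.Subset.antisymm (Cmk'_right_subset hC'12.le hsuf12 hpre12 hm hk h₁ h₂ r)
          (Cmk'_right_subset hC'12.ge hsuf21 hpre21 hm hk h₂ h₁ r)
      have e4 : DmkPref m k (w₁ ++ r) = DmkPref m k (w₂ ++ r) :=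
        Set.Subset.antisymm (DmkPref_right_subset hpre12 hk hm1 r)
          (DmkPref_right_subset hpre21 hk hm2 r)
      simp only [Emk, Dmk, Dmk', Prod.mk.injEq]
      exact ⟨⟨e1, e2⟩, e3, e4⟩
    · have e1 : Cmk bar m k (l ++ w₁) = Cmk bar m k (l ++ w₂) :=
        Set.Subset.antisymm (Cmk_left_subset hC12.le hsuf12 hpre12 hm hk h₁ h₂ l)
          (Cmk_left_subset hC12.ge hsuf21 hpre21 hm hk h₂ h₁ l)
      have e2 : DmkSuf m k (l ++ w₁) = DmkSuf m k (l ++ w₂) :=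
        Set.Subset.antisymm (DmkSuf_left_subset hsuf12 hk hm1 l)
          (DmkSuf_left_subset hsuf21 hk hm2 l)
      have e3 : Cmk' bar m k (l ++ w₁) = Cmk' bar m k (l ++ w₂) :=
        Set.Subset.antisymm (Cmk'_left_subset hC'12.le hpre12 hk l)
          (Cmk'_left_subset hC'12.ge hpre21 hk l)
      have e4 : DmkPref m k (l ++ w₁) = DmkPref m k (l ++ w₂) :=
        Set.Subset.antisymm (DmkPref_left_subset hpre12 l) (DmkPref_left_subset hpre21 l)
      simp only [Emk, Dmk, Dmk', Prod.mk.injEq]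
      exact ⟨⟨e1, e2⟩, e3, e4⟩

end Hairpin
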